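/- Let B be an isolating block for the flow φ with entrance set ∂₊B, exit set ∂₋B, and let a_± ⊆ ∂_±B denote the points whose forward (resp. backward) orbit stays in B. Then the flow-induced map h_B: ∂₊B \ a₊ → ∂₋B \ a₋, sending an entrance point to its first exit point, is a homeomorphism. -/

import Mathlib

open MeasureTheory Set

/-- A set is invariant under the flow `φ`. -/
def InvariantSet {M : Type*} (φ : ℝ → M → M) (Z : Set M) : Prop :=
  ∀ t, φ t '' Z ⊆ Z

/-- The time-`t` flow map applied to pairs, used to express local product structures. -/
def flowMap {M : Type*} (φ : ℝ → M → M) : M × ℝ → M := fun p => φ p.2 p.1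

/-- `S` is a local cross section of width `2δ` for the flow `φ`: the flow-induced map
`S × (-δ,δ) → M` is injective with open image (a homeomorphism onto its image). -/
def IsLocalCrossSection {M : Type*} [TopologicalSpace M] (φ : ℝ → M → M)
    (S : Set M) (δ : ℝ) : Prop :=
  Set.InjOn (flowMap φ) (S ×ˢ Set.Ioo (-δ) δ) ∧
  IsOpen (flowMap φ '' (S ×ˢ Set.Ioo (-δ) δ))

/-- An isolating block `B` for the invariant set `Z` with respect to the flow `φ`,
with entrance set `∂₊B = Splus ∩ B` and exit set `∂₋B = Sminus ∩ B`. -/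
structure IsolatingBlock {M : Type*} [TopologicalSpace M] (φ : ℝ → M → M)
    (Z : Set M) where
  B : Set M
  Splus : Set M
  Sminus : Set M
  δ : ℝ
  δ_pos : 0 < δ
  /-- `B` is the closure of an open set. -/
  closure_int : B = closure (interior B)
  secPlus : IsLocalCrossSection φ Splus δ
  secMinus : IsLocalCrossSection φ Sminus δ
  /-- (B1) the entrance and exit sets are closed in `M`. -/
  entrance_closed : IsClosed (Splus ∩ B)
  exit_closed : IsClosed (Sminus ∩ B)
  /-- (B2) near the entrance set, `B` consists of forward flow segments. -/
  B2plus : flowMap φ '' (Splus ×ˢ Set.Ioo (-δ) δ) ∩ B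
      = flowMap φ '' ((Splus ∩ B) ×ˢ Set.Ico 0 δ)
  /-- (B2) near the exit set, `B` consists of backward flow segments. -/
  B2minus : flowMap φ '' (Sminus ×ˢ Set.Ioo (-δ) δ) ∩ B
      = flowMap φ '' ((Sminus ∩ B) ×ˢ Set.Ioc (-δ) 0)
  /-- (B3) other boundary points flow inside the boundary from `∂₊B` to `∂₋B`. -/
  B3 : ∀ x ∈ (frontier B) \ ((Splus ∩ B) ∪ (Sminus ∩ B)), ∃ t₁ < (0:ℝ), ∃ t₂ > (0:ℝ),
      (∀ t ∈ Set.Icc t₁ t₂, φ t x ∈ frontier B) ∧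
      φ t₁ x ∈ Splus ∩ B ∧ φ t₂ x ∈ Sminus ∩ B
  /-- (B4) `Z` is the maximal invariant subset of `B`. -/
  maximal : ∀ S ⊆ B, InvariantSet φ S → S ⊆ Z
  Z_sub : Z ⊆ B
  Z_inv : InvariantSet φ Z

/-- entrance set of an isolating block -/
def IsolatingBlock.entrance {M : Type*} [TopologicalSpace M] {φ : ℝ → M → M}
    {Z : Set M} (bl : IsolatingBlock φ Z) : Set M := bl.Splus ∩ bl.B

/-- exit set of an isolating block -/
def IsolatingBlock.exit {M : Type*} [TopologicalSpace M] {φ : ℝ → M → M}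
    {Z : Set M} (bl : IsolatingBlock φ Z) : Set M := bl.Sminus ∩ bl.B

/-- `ν` is the slice measure induced on the local cross section `S` (of width `2δ`)
by the flow-invariant measure `μ`, characterized by
`μ(A ⋅ (s,t)) = (t - s) ⋅ ν(A)` for measurable `A ⊆ S` and `-δ < s ≤ t < δ`. -/
def IsSliceMeasure {M : Type*} [TopologicalSpace M] [MeasurableSpace M]
    (φ : ℝ → M → M) (μ : Measure M) (S : Set M) (δ : ℝ) (ν : Measure M) : Prop :=
  (∀ A : Set M, A ⊆ S → MeasurableSet A → ∀ s t : ℝ, -δ < s → s ≤ t → t < δ →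
    μ (flowMap φ '' (A ×ˢ Set.Ioo s t)) = ENNReal.ofReal (t - s) * ν A) ∧
  ν Sᶜ = 0

/-- the first exit time from the block `B` -/
noncomputable def exitTime {M : Type*} (φ : ℝ → M → M) (B : Set M) (x : M) : ℝ :=
  sInf {t : ℝ | 0 < t ∧ φ t x ∉ B}

section Aux
variable {M : Type*} [TopologicalSpace M] {φ : ℝ → M → M} {Z : Set M}

theorem IsolatingBlock.closedB (bl : IsolatingBlock φ Z) : IsClosed bl.B := by
  rw [bl.closure_int]; exact isClosed_closure

theorem IsolatingBlock.frontier_sub (bl : IsolatingBlock φ Z) : frontier bl.B ⊆ bl.B :=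
  bl.closedB.frontier_subset

theorem IsolatingBlock.ent_fwd (bl : IsolatingBlock φ Z) {x : M} {t : ℝ}
    (hx : x ∈ bl.entrance) (ht : t ∈ Set.Ico 0 bl.δ) : φ t x ∈ bl.B := by
  have h : flowMap φ (x, t) ∈ flowMap φ '' ((bl.Splus ∩ bl.B) ×ˢ Set.Ico 0 bl.δ) :=
    ⟨(x, t), ⟨hx, ht⟩, rfl⟩
  rw [← bl.B2plus] at h
  exact h.2

theorem IsolatingBlock.ent_bwd (bl : IsolatingBlock φ Z) {x : M} {t : ℝ}
    (hx : x ∈ bl.entrance) (ht : t ∈ Set.Ioo (-bl.δ) 0) : φ t x ∉ bl.B := by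
  intro hB
  have hmem : flowMap φ (x, t) ∈ flowMap φ '' (bl.Splus ×ˢ Set.Ioo (-bl.δ) bl.δ) ∩ bl.B :=
    ⟨⟨(x, t), ⟨hx.1, ht.1, ht.2.trans bl.δ_pos⟩, rfl⟩, hB⟩
  rw [bl.B2plus] at hmem
  obtain ⟨⟨w, s⟩, ⟨⟨hw, _⟩, hs⟩, heq⟩ := hmem
  have h1 : ((w, s) : M × ℝ) ∈ bl.Splus ×ˢ Set.Ioo (-bl.δ) bl.δ :=
    ⟨hw, (neg_lt_zero.mpr bl.δ_pos).trans_le hs.1, hs.2⟩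
  have h2 : ((x, t) : M × ℝ) ∈ bl.Splus ×ˢ Set.Ioo (-bl.δ) bl.δ :=
    ⟨hx.1, ht.1, ht.2.trans bl.δ_pos⟩
  have := bl.secPlus.1 h1 h2 heq
  have hst : s = t := congrArg Prod.snd this
  exact absurd (hst ▸ hs.1) (not_le.mpr ht.2)

theorem IsolatingBlock.exit_bwd (bl : IsolatingBlock φ Z) {x : M} {t : ℝ}
    (hx : x ∈ bl.exit) (ht : t ∈ Set.Ioc (-bl.δ) 0) : φ t x ∈ bl.B := by
  have h : flowMap φ (x, t) ∈ flowMap φ '' ((bl.Sminus ∩ bl.B) ×ˢ Set.Ioc (-bl.δ) 0) :=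
    ⟨(x, t), ⟨hx, ht⟩, rfl⟩
  rw [← bl.B2minus] at h
  exact h.2

theorem IsolatingBlock.exit_fwd (bl : IsolatingBlock φ Z) {x : M} {t : ℝ}
    (hx : x ∈ bl.exit) (ht : t ∈ Set.Ioo 0 bl.δ) : φ t x ∉ bl.B := by
  intro hB
  have hmem : flowMap φ (x, t) ∈ flowMap φ '' (bl.Sminus ×ˢ Set.Ioo (-bl.δ) bl.δ) ∩ bl.B :=
    ⟨⟨(x, t), ⟨hx.1, (neg_lt_zero.mpr bl.δ_pos).trans ht.1, ht.2⟩, rfl⟩, hB⟩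
  rw [bl.B2minus] at hmem
  obtain ⟨⟨w, s⟩, ⟨⟨hw, _⟩, hs⟩, heq⟩ := hmem
  have h1 : ((w, s) : M × ℝ) ∈ bl.Sminus ×ˢ Set.Ioo (-bl.δ) bl.δ :=
    ⟨hw, hs.1, hs.2.trans_lt bl.δ_pos⟩
  have h2 : ((x, t) : M × ℝ) ∈ bl.Sminus ×ˢ Set.Ioo (-bl.δ) bl.δ :=
    ⟨hx.1, (neg_lt_zero.mpr bl.δ_pos).trans ht.1, ht.2⟩
  have := bl.secMinus.1 h1 h2 heq
  have hst : s = t := congrArg Prod.snd this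
  exact absurd (hst ▸ ht.1) (not_lt.mpr hs.2)


variable (hcont : Continuous fun p : ℝ × M => φ p.1 p.2)
    (hid : ∀ x, φ 0 x = x) (hgrp : ∀ s t x : _, φ (s + t) x = φ s (φ t x))
include hcont hid hgrp
set_option linter.unusedSectionVars false




theorem mem_B_of_lt_exitTime (bl : IsolatingBlock φ Z) {x : M} (hxB : x ∈ bl.B)
    {t : ℝ} (ht0 : 0 ≤ t) (ht : t < exitTime φ bl.B x) : φ t x ∈ bl.B := by
  rcases eq_or_lt_of_le ht0 with h | h
  · rw [← h, hid]; exact hxB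
  · by_contra hout
    have hbdd : BddBelow {t : ℝ | 0 < t ∧ φ t x ∉ bl.B} := ⟨0, fun _ ha => ha.1.le⟩
    exact absurd (csInf_le hbdd ⟨h, hout⟩) (not_le.mpr ht)

theorem delta_le_exitTime (bl : IsolatingBlock φ Z) {x : M} (hx : x ∈ bl.entrance)
    (hex : ∃ t, 0 < t ∧ φ t x ∉ bl.B) : bl.δ ≤ exitTime φ bl.B x := by
  refine le_csInf hex fun b hb => ?_
  by_contra h
  exact hb.2 (bl.ent_fwd hx ⟨hb.1.le, not_le.mp h⟩)

theorem mem_B_exitTime (bl : IsolatingBlock φ Z) {x : M} (hx : x ∈ bl.entrance)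
    (hex : ∃ t, 0 < t ∧ φ t x ∉ bl.B) : φ (exitTime φ bl.B x) x ∈ bl.B := by
  set τ := exitTime φ bl.B x with hτ
  have hτpos : 0 < τ := lt_of_lt_of_le bl.δ_pos (delta_le_exitTime hcont hid hgrp bl hx hex)
  have hc : Continuous fun t : ℝ => φ t x :=
    hcont.comp (continuous_id.prodMk continuous_const)
  refine bl.closedB.mem_of_tendsto
    ((hc.tendsto τ).mono_left (nhdsWithin_le_nhds : nhdsWithin τ (Set.Iio τ) ≤ nhds τ)) ?_
  filter_upwards [Ioo_mem_nhdsLT_of_mem (⟨hτpos, le_refl τ⟩ : τ ∈ Set.Ioc 0 τ)]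
    with t ht
  exact mem_B_of_lt_exitTime hcont hid hgrp bl hx.2 ht.1.le ht.2

theorem out_near (bl : IsolatingBlock φ Z) {x : M} (hx : x ∈ bl.entrance)
    (hex : ∃ t, 0 < t ∧ φ t x ∉ bl.B) :
    ∀ ε > (0:ℝ), ∃ s, 0 < s ∧ s < ε ∧ φ s (φ (exitTime φ bl.B x) x) ∉ bl.B := by
  intro ε hε
  set τ := exitTime φ bl.B x with hτ
  obtain ⟨t, htS, htlt⟩ := exists_lt_of_csInf_lt hex (lt_add_of_pos_right τ hε)
  have hτt : τ ≤ t := csInf_le ⟨0, fun _ ha => ha.1.le⟩ htS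
  have hne : τ ≠ t := by
    intro h
    exact htS.2 (h ▸ mem_B_exitTime hcont hid hgrp bl hx hex)
  refine ⟨t - τ, sub_pos.mpr (lt_of_le_of_ne hτt hne), by linarith, ?_⟩
  have : φ (t - τ + τ) x = φ (t - τ) (φ τ x) := hgrp _ _ _
  rw [sub_add_cancel] at this
  rw [← this]
  exact htS.2

theorem exit_mem (bl : IsolatingBlock φ Z) {x : M} (hx : x ∈ bl.entrance)
    (hex : ∃ t, 0 < t ∧ φ t x ∉ bl.B) : φ (exitTime φ bl.B x) x ∈ bl.exit := by
  set τ := exitTime φ bl.B x with hτ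
  set y := φ τ x with hy
  by_contra hyexit
  have hyB : y ∈ bl.B := mem_B_exitTime hcont hid hgrp bl hx hex
  have hout := out_near hcont hid hgrp bl hx hex
  -- y is not in the interior of B
  have hnotint : y ∉ interior bl.B := by
    intro hint
    have hc : Continuous fun s : ℝ => φ s y :=
      hcont.comp (continuous_id.prodMk continuous_const)
    have hpre : (fun s : ℝ => φ s y) ⁻¹' interior bl.B ∈ nhds (0:ℝ) :=
      hc.continuousAt.preimage_mem_nhds (isOpen_interior.mem_nhds (by rw [hid]; exact hint))
    obtain ⟨ε, hε, hball⟩ := Metric.mem_nhds_iff.mp hpre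
    obtain ⟨s, hs0, hsε, hsout⟩ := hout ε hε
    exact hsout (interior_subset (hball (by simp [abs_of_pos hs0, hsε, Real.dist_eq])))
  have hyfr : y ∈ frontier bl.B := ⟨subset_closure hyB, hnotint⟩
  by_cases hyent : y ∈ bl.entrance
  · obtain ⟨s, hs0, hsδ, hsout⟩ := hout bl.δ bl.δ_pos
    exact hsout (bl.ent_fwd hyent ⟨hs0.le, hsδ⟩)
  · obtain ⟨t₁, ht₁, t₂, ht₂, hseg, -, -⟩ :=
      bl.B3 y ⟨hyfr, fun hmem => hmem.elim hyent hyexit⟩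
    obtain ⟨s, hs0, hst₂, hsout⟩ := hout t₂ ht₂
    exact hsout (bl.frontier_sub (hseg s ⟨le_of_lt (ht₁.trans hs0), hst₂.le⟩))

theorem exitTime_continuousOn (bl : IsolatingBlock φ Z) :
    ContinuousOn (exitTime φ bl.B)
      {x | x ∈ bl.entrance ∧ ∃ t, 0 < t ∧ φ t x ∉ bl.B} := by
  intro x₀ hx₀
  set s : Set M := {x | x ∈ bl.entrance ∧ ∃ t, 0 < t ∧ φ t x ∉ bl.B} with hs
  set τ₀ := exitTime φ bl.B x₀ with hτ₀
  have hy₀ : φ τ₀ x₀ ∈ bl.exit := exit_mem hcont hid hgrp bl hx₀.1 hx₀.2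
  have hδτ₀ : bl.δ ≤ τ₀ := delta_le_exitTime hcont hid hgrp bl hx₀.1 hx₀.2
  rw [ContinuousWithinAt, Metric.tendsto_nhds]
  intro ε hε
  set ε' := min (ε / 2) (bl.δ / 2) with hε'
  have hε'pos : 0 < ε' := lt_min (by linarith) (by linarith [bl.δ_pos])
  have hε'δ : ε' < bl.δ := lt_of_le_of_lt (min_le_right _ _) (by linarith [bl.δ_pos])
  have hε'ε : ε' < ε := lt_of_le_of_lt (min_le_left _ _) (by linarith)
  -- upper semicontinuity neighborhood
  have hU : IsOpen ((fun x => φ (τ₀ + ε') x) ⁻¹' bl.Bᶜ) :=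
    bl.closedB.isOpen_compl.preimage (hcont.comp (continuous_const.prodMk continuous_id))
  have hx₀U : x₀ ∈ (fun x => φ (τ₀ + ε') x) ⁻¹' bl.Bᶜ := by
    have : φ (ε' + τ₀) x₀ = φ ε' (φ τ₀ x₀) := hgrp _ _ _
    simp only [Set.mem_preimage, Set.mem_compl_iff]
    rw [add_comm, this]
    exact bl.exit_fwd hy₀ ⟨hε'pos, hε'δ⟩
  have hUbound : ∀ x ∈ ((fun x => φ (τ₀ + ε') x) ⁻¹' bl.Bᶜ),
      exitTime φ bl.B x ≤ τ₀ + ε' := by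
    intro x hxU
    exact csInf_le ⟨0, fun _ ha => ha.1.le⟩
      ⟨by linarith [bl.δ_pos], hxU⟩
  -- lower semicontinuity neighborhood
  obtain ⟨v, hv, hx₀v, hvbound⟩ : ∃ v : Set M, IsOpen v ∧ x₀ ∈ v ∧
      ∀ x ∈ v ∩ s, τ₀ - ε < exitTime φ bl.B x := by
    by_cases hK : bl.δ ≤ τ₀ - ε
    · have hN : IsOpen ((fun p : ℝ × M => φ p.1 p.2) ⁻¹' bl.exitᶜ) :=
        bl.exit_closed.isOpen_compl.preimage hcont
      have hsub : Set.Icc bl.δ (τ₀ - ε) ×ˢ ({x₀} : Set M) ⊆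
          (fun p : ℝ × M => φ p.1 p.2) ⁻¹' bl.exitᶜ := by
        rintro ⟨t, x⟩ ⟨htK, hxm⟩
        have hxm' : x = x₀ := hxm
        simp only [Set.mem_preimage, Set.mem_compl_iff]
        rw [hxm']
        intro hexit
        set c := min ε bl.δ / 2 with hc
        have hcpos : 0 < c := half_pos (lt_min hε bl.δ_pos)
        have hout : φ c (φ t x₀) ∉ bl.B :=
          bl.exit_fwd hexit ⟨hcpos, by
            have := min_le_right ε bl.δ; simp only [hc]; linarith [bl.δ_pos]⟩
        have heq : φ (c + t) x₀ = φ c (φ t x₀) := hgrp _ _ _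
        have hin : φ (c + t) x₀ ∈ bl.B := by
          refine mem_B_of_lt_exitTime hcont hid hgrp bl hx₀.1.2 (by linarith [htK.1, bl.δ_pos]) ?_
          have h1 : c ≤ ε / 2 := by
            have := min_le_left ε bl.δ; simp only [hc]; linarith
          linarith [htK.2]
        rw [heq] at hin
        exact hout hin
      obtain ⟨u, v, hu, hv, hKu, hxv, huv⟩ :=
        generalized_tube_lemma isCompact_Icc isCompact_singleton hN hsub
      refine ⟨v, hv, hxv rfl, ?_⟩
      rintro x ⟨hxv', hxs⟩
      have hδx : bl.δ ≤ exitTime φ bl.B x := delta_le_exitTime hcont hid hgrp bl hxs.1 hxs.2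
      by_contra hle
      push_neg at hle
      have hmemK : exitTime φ bl.B x ∈ Set.Icc bl.δ (τ₀ - ε) := ⟨hδx, hle⟩
      have : (exitTime φ bl.B x, x) ∈ u ×ˢ v := ⟨hKu hmemK, hxv'⟩
      exact (huv this) (exit_mem hcont hid hgrp bl hxs.1 hxs.2)
    · refine ⟨Set.univ, isOpen_univ, trivial, ?_⟩
      rintro x ⟨-, hxs⟩
      have := delta_le_exitTime hcont hid hgrp bl hxs.1 hxs.2
      push_neg at hK
      linarith
  -- combine
  have hmem : ((fun x => φ (τ₀ + ε') x) ⁻¹' bl.Bᶜ) ∩ v ∈ nhdsWithin x₀ s :=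
    mem_nhdsWithin_of_mem_nhds ((hU.inter hv).mem_nhds ⟨hx₀U, hx₀v⟩)
  filter_upwards [hmem, self_mem_nhdsWithin] with x hx hxs
  have h1 : exitTime φ bl.B x ≤ τ₀ + ε' := hUbound x hx.1
  have h2 : τ₀ - ε < exitTime φ bl.B x := hvbound x ⟨hx.2, hxs⟩
  rw [Real.dist_eq, abs_sub_lt_iff]
  constructor <;> linarith

theorem exitTime_rev (bl : IsolatingBlock φ Z) {x : M} (hx : x ∈ bl.entrance)
    (hex : ∃ t, 0 < t ∧ φ t x ∉ bl.B) :
    exitTime (fun t x => φ (-t) x) bl.B (φ (exitTime φ bl.B x) x) = exitTime φ bl.B x := by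
  set τ := exitTime φ bl.B x with hτ
  have hτδ : bl.δ ≤ τ := delta_le_exitTime hcont hid hgrp bl hx hex
  have key : ∀ t : ℝ, φ (-t) (φ τ x) = φ (τ - t) x := by
    intro t
    rw [← hgrp]; ring_nf
  have hSne : ∀ e, 0 < e → e < bl.δ → (τ + e) ∈ {t : ℝ | 0 < t ∧ φ (-t) (φ τ x) ∉ bl.B} := by
    intro e he heδ
    refine ⟨by linarith [bl.δ_pos], ?_⟩
    rw [key]
    have : τ - (τ + e) = -e := by ring
    rw [this]
    exact bl.ent_bwd hx ⟨by linarith, by linarith⟩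
  have hne : {t : ℝ | 0 < t ∧ φ (-t) (φ τ x) ∉ bl.B}.Nonempty :=
    ⟨τ + bl.δ / 2, hSne (bl.δ / 2) (by linarith [bl.δ_pos]) (by linarith [bl.δ_pos])⟩
  refine le_antisymm ?_ ?_
  · refine le_of_forall_pos_le_add fun ε hε => ?_
    set e := min ε bl.δ / 2 with he
    have hepos : 0 < e := half_pos (lt_min hε bl.δ_pos)
    have h1 : e < bl.δ := by
      have := min_le_right ε bl.δ; simp only [he]; linarith [bl.δ_pos]
    have h2 : e ≤ ε := by
      have := min_le_left ε bl.δ; simp only [he]; linarith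
    calc exitTime (fun t x => φ (-t) x) bl.B (φ τ x)
        ≤ τ + e := csInf_le ⟨0, fun _ ha => ha.1.le⟩ (hSne e hepos h1)
      _ ≤ τ + ε := by linarith
  · refine le_csInf hne fun b hb => ?_
    by_contra hlt
    push_neg at hlt
    have hbB : φ (-b) (φ τ x) ∈ bl.B := by
      rw [key]
      exact mem_B_of_lt_exitTime hcont hid hgrp bl hx.2 (by linarith [hb.1]) (by linarith [hb.1])
    exact hb.2 hbB

end Aux

section Rev
variable {M : Type*} [TopologicalSpace M] {φ : ℝ → M → M} {Z : Set M}

theorem flowMap_rev_image (S : Set M) (I : Set ℝ) :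
    flowMap (fun t x => φ (-t) x) '' (S ×ˢ I) = flowMap φ '' (S ×ˢ (-I)) := by
  ext z
  constructor
  · rintro ⟨⟨a, b⟩, ⟨ha, hb⟩, rfl⟩
    exact ⟨(a, -b), ⟨ha, by simpa using hb⟩, rfl⟩
  · rintro ⟨⟨a, b⟩, ⟨ha, hb⟩, rfl⟩
    exact ⟨(a, -b), ⟨ha, by simpa using hb⟩, by simp [flowMap]⟩

/-- The reversed-flow isolating block. -/
def IsolatingBlock.rev (bl : IsolatingBlock φ Z) :
    IsolatingBlock (fun t x => φ (-t) x) Z where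
  B := bl.B
  Splus := bl.Sminus
  Sminus := bl.Splus
  δ := bl.δ
  δ_pos := bl.δ_pos
  closure_int := bl.closure_int
  secPlus := by
    constructor
    · rintro ⟨a, b⟩ ⟨ha, hb⟩ ⟨c, d⟩ ⟨hc, hd⟩ heq
      have hb1 : -bl.δ < b := hb.1
      have hb2 : b < bl.δ := hb.2
      have hd1 : -bl.δ < d := hd.1
      have hd2 : d < bl.δ := hd.2
      have h1 : ((a, -b) : M × ℝ) ∈ bl.Sminus ×ˢ Set.Ioo (-bl.δ) bl.δ :=
        ⟨ha, ⟨show -bl.δ < -b by linarith, show -b < bl.δ by linarith⟩⟩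
      have h2 : ((c, -d) : M × ℝ) ∈ bl.Sminus ×ˢ Set.Ioo (-bl.δ) bl.δ :=
        ⟨hc, ⟨show -bl.δ < -d by linarith, show -d < bl.δ by linarith⟩⟩
      have heq' : flowMap φ (a, -b) = flowMap φ (c, -d) := heq
      have := bl.secMinus.1 h1 h2 heq'
      have hac : a = c := congrArg Prod.fst this
      have hbd : -b = -d := congrArg Prod.snd this
      exact Prod.ext hac (neg_injective hbd)
    · rw [flowMap_rev_image]
      rw [show -(Set.Ioo (-bl.δ) bl.δ) = Set.Ioo (-bl.δ) bl.δ by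
        rw [Set.neg_Ioo]; simp]
      exact bl.secMinus.2
  secMinus := by
    constructor
    · rintro ⟨a, b⟩ ⟨ha, hb⟩ ⟨c, d⟩ ⟨hc, hd⟩ heq
      have hb1 : -bl.δ < b := hb.1
      have hb2 : b < bl.δ := hb.2
      have hd1 : -bl.δ < d := hd.1
      have hd2 : d < bl.δ := hd.2
      have h1 : ((a, -b) : M × ℝ) ∈ bl.Splus ×ˢ Set.Ioo (-bl.δ) bl.δ :=
        ⟨ha, ⟨show -bl.δ < -b by linarith, show -b < bl.δ by linarith⟩⟩
      have h2 : ((c, -d) : M × ℝ) ∈ bl.Splus ×ˢ Set.Ioo (-bl.δ) bl.δ :=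
        ⟨hc, ⟨show -bl.δ < -d by linarith, show -d < bl.δ by linarith⟩⟩
      have heq' : flowMap φ (a, -b) = flowMap φ (c, -d) := heq
      have := bl.secPlus.1 h1 h2 heq'
      have hac : a = c := congrArg Prod.fst this
      have hbd : -b = -d := congrArg Prod.snd this
      exact Prod.ext hac (neg_injective hbd)
    · rw [flowMap_rev_image]
      rw [show -(Set.Ioo (-bl.δ) bl.δ) = Set.Ioo (-bl.δ) bl.δ by
        rw [Set.neg_Ioo]; simp]
      exact bl.secPlus.2
  entrance_closed := bl.exit_closed
  exit_closed := bl.entrance_closed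
  B2plus := by
    rw [flowMap_rev_image, flowMap_rev_image]
    rw [show -(Set.Ioo (-bl.δ) bl.δ) = Set.Ioo (-bl.δ) bl.δ by rw [Set.neg_Ioo]; simp]
    rw [show -(Set.Ico (0:ℝ) bl.δ) = Set.Ioc (-bl.δ) 0 by rw [Set.neg_Ico]; simp]
    exact bl.B2minus
  B2minus := by
    rw [flowMap_rev_image, flowMap_rev_image]
    rw [show -(Set.Ioo (-bl.δ) bl.δ) = Set.Ioo (-bl.δ) bl.δ by rw [Set.neg_Ioo]; simp]
    rw [show -(Set.Ioc (-bl.δ) (0:ℝ)) = Set.Ico 0 bl.δ by rw [Set.neg_Ioc]; simp]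
    exact bl.B2plus
  B3 := by
    intro x hx
    have hx' : x ∈ frontier bl.B \ ((bl.Splus ∩ bl.B) ∪ (bl.Sminus ∩ bl.B)) :=
      ⟨hx.1, fun h => hx.2 (h.elim Or.inr Or.inl)⟩
    obtain ⟨t₁, ht₁, t₂, ht₂, hseg, hent, hexit⟩ := bl.B3 x hx'
    refine ⟨-t₂, by linarith, -t₁, by linarith, ?_, by simpa using hexit,
      by simpa using hent⟩
    intro t ht
    exact hseg (-t) ⟨by linarith [ht.2], by linarith [ht.1]⟩
  maximal := by
    intro S hS hinv
    refine bl.maximal S hS fun t z hz => ?_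
    obtain ⟨w, hw, rfl⟩ := hz
    simpa using hinv (-t) ⟨w, hw, rfl⟩
  Z_sub := bl.Z_sub
  Z_inv := by
    intro t z hz
    obtain ⟨w, hw, rfl⟩ := hz
    exact bl.Z_inv (-t) ⟨w, hw, rfl⟩

end Rev

/-- for an isolating block `B`, the flow-induced first-exit map
`h_B : ∂₊B \ a₊ → ∂₋B \ a₋` is a homeomorphism (with continuous exit time). -/
theorem exitMap_homeomorph {M : Type*} [TopologicalSpace M] [CompactSpace M]
    (φ : ℝ → M → M)
    (hcont : Continuous (fun p : ℝ × M => φ p.1 p.2))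
    (hid : ∀ x, φ 0 x = x)
    (hgrp : ∀ s t x, φ (s + t) x = φ s (φ t x))
    (Z : Set M) (bl : IsolatingBlock φ Z) :
    ∀ aP aM : Set M,
      aP = {x ∈ bl.entrance | ∀ t : ℝ, 0 ≤ t → φ t x ∈ bl.B} →
      aM = {x ∈ bl.exit | ∀ t : ℝ, t ≤ 0 → φ t x ∈ bl.B} →
      ContinuousOn (exitTime φ bl.B) (bl.entrance \ aP) ∧
      (∀ x ∈ bl.entrance \ aP, φ (exitTime φ bl.B x) x ∈ bl.exit \ aM) ∧
      ∃ h : (bl.entrance \ aP : Set M) ≃ₜ (bl.exit \ aM : Set M),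
        ∀ p : (bl.entrance \ aP : Set M), (h p : M) = φ (exitTime φ bl.B p) p := by
  intro aP aM haP haM
  subst haP haM
  -- flow axioms for the reversed flow
  have hid' : ∀ x, (fun t x => φ (-t) x) 0 x = x := by
    intro x; simp only [neg_zero]; exact hid x
  have hgrp' : ∀ s t x, (fun t x => φ (-t) x) (s + t) x
      = (fun t x => φ (-t) x) s ((fun t x => φ (-t) x) t x) := by
    intro s t x; simp only []; rw [neg_add, hgrp]
  have hcont' : Continuous fun p : ℝ × M => (fun t x => φ (-t) x) p.1 p.2 :=
    hcont.comp ((continuous_neg.comp continuous_fst).prodMk continuous_snd)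
  set bl' := bl.rev with hbl'
  -- set descriptions
  have hEset : bl.entrance \ {x ∈ bl.entrance | ∀ t : ℝ, 0 ≤ t → φ t x ∈ bl.B}
      = {x | x ∈ bl.entrance ∧ ∃ t, 0 < t ∧ φ t x ∉ bl.B} := by
    ext x
    simp only [Set.mem_diff, Set.mem_setOf_eq]
    constructor
    · rintro ⟨hx, hnot⟩
      refine ⟨hx, ?_⟩
      push_neg at hnot
      obtain ⟨t, ht0, hout⟩ := hnot hx
      refine ⟨t, lt_of_le_of_ne ht0 ?_, hout⟩
      rintro rfl
      exact hout (by rw [hid]; exact hx.2)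
    · rintro ⟨hx, t, ht, hout⟩
      exact ⟨hx, fun h => hout (h.2 t ht.le)⟩
  have hXset : bl.exit \ {x ∈ bl.exit | ∀ t : ℝ, t ≤ 0 → φ t x ∈ bl.B}
      = {x | x ∈ bl'.entrance ∧ ∃ t, 0 < t ∧ (fun t x => φ (-t) x) t x ∉ bl'.B} := by
    ext x
    simp only [Set.mem_diff, Set.mem_setOf_eq]
    constructor
    · rintro ⟨hx, hnot⟩
      refine ⟨hx, ?_⟩
      push_neg at hnot
      obtain ⟨t, ht0, hout⟩ := hnot hx
      refine ⟨-t, ?_, ?_⟩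
      · rcases lt_or_eq_of_le ht0 with h | h
        · linarith
        · exfalso; subst h; exact hout (by rw [hid]; exact hx.2)
      · show φ (- -t) x ∉ bl.B
        simpa using hout
    · rintro ⟨hx, t, ht, hout⟩
      exact ⟨hx, fun h => hout (h.2 (-t) (by linarith))⟩
  -- continuity of exit time
  have hτcont : ContinuousOn (exitTime φ bl.B)
      (bl.entrance \ {x ∈ bl.entrance | ∀ t : ℝ, 0 ≤ t → φ t x ∈ bl.B}) := by
    rw [hEset]; exact exitTime_continuousOn hcont hid hgrp bl
  -- the exit map sends E into X
  have hmaps : ∀ x ∈ bl.entrance \ {x ∈ bl.entrance | ∀ t : ℝ, 0 ≤ t → φ t x ∈ bl.B},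
      φ (exitTime φ bl.B x) x ∈
        bl.exit \ {x ∈ bl.exit | ∀ t : ℝ, t ≤ 0 → φ t x ∈ bl.B} := by
    intro x hx
    rw [hEset] at hx
    have hδτ : bl.δ ≤ exitTime φ bl.B x := delta_le_exitTime hcont hid hgrp bl hx.1 hx.2
    refine ⟨exit_mem hcont hid hgrp bl hx.1 hx.2, ?_⟩
    intro hmem
    have hIn := hmem.2 (-(exitTime φ bl.B x + bl.δ / 2)) (by linarith [bl.δ_pos])
    have heq : φ (-(exitTime φ bl.B x + bl.δ / 2) + exitTime φ bl.B x) x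
        = φ (-(exitTime φ bl.B x + bl.δ / 2)) (φ (exitTime φ bl.B x) x) := hgrp _ _ _
    have h2 : -(exitTime φ bl.B x + bl.δ / 2) + exitTime φ bl.B x = -(bl.δ / 2) := by ring
    rw [h2] at heq
    exact bl.ent_bwd hx.1 ⟨by linarith [bl.δ_pos], by linarith [bl.δ_pos]⟩ (heq ▸ hIn)
  -- the reversed exit map sends X into E
  have hmaps' : ∀ y ∈ bl.exit \ {x ∈ bl.exit | ∀ t : ℝ, t ≤ 0 → φ t x ∈ bl.B},
      (fun t x => φ (-t) x) (exitTime (fun t x => φ (-t) x) bl.B y) y ∈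
        bl.entrance \ {x ∈ bl.entrance | ∀ t : ℝ, 0 ≤ t → φ t x ∈ bl.B} := by
    intro y hy
    rw [hXset] at hy
    have hδσ : bl.δ ≤ exitTime (fun t x => φ (-t) x) bl.B y :=
      delta_le_exitTime hcont' hid' hgrp' bl' hy.1 hy.2
    refine ⟨exit_mem hcont' hid' hgrp' bl' hy.1 hy.2, ?_⟩
    intro hmem
    have hIn := hmem.2 (exitTime (fun t x => φ (-t) x) bl.B y + bl.δ / 2)
      (by linarith [bl.δ_pos])
    have hOut : (fun t x => φ (-t) x)
        (-(exitTime (fun t x => φ (-t) x) bl.B y + bl.δ / 2))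
        ((fun t x => φ (-t) x) (exitTime (fun t x => φ (-t) x) bl.B y) y) ∉ bl.B := by
      have heq := hgrp' (-(exitTime (fun t x => φ (-t) x) bl.B y + bl.δ / 2))
        (exitTime (fun t x => φ (-t) x) bl.B y) y
      rw [← heq]
      have h2 : -(exitTime (fun t x => φ (-t) x) bl.B y + bl.δ / 2)
          + exitTime (fun t x => φ (-t) x) bl.B y = -(bl.δ / 2) := by ring
      rw [h2]
      have hδeq : bl'.δ = bl.δ := rfl
      exact bl'.ent_bwd hy.1 ⟨by rw [hδeq]; linarith [bl.δ_pos], by linarith [bl.δ_pos]⟩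
    refine hOut ?_
    simpa using hIn
  refine ⟨hτcont, hmaps, ?_⟩
  -- inverse identities
  have hinv1 : ∀ x ∈ bl.entrance \ {x ∈ bl.entrance | ∀ t : ℝ, 0 ≤ t → φ t x ∈ bl.B},
      (fun t x => φ (-t) x)
        (exitTime (fun t x => φ (-t) x) bl.B (φ (exitTime φ bl.B x) x))
        (φ (exitTime φ bl.B x) x) = x := by
    intro x hx
    rw [hEset] at hx
    rw [exitTime_rev hcont hid hgrp bl hx.1 hx.2]
    show φ (-(exitTime φ bl.B x)) (φ (exitTime φ bl.B x) x) = x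
    rw [← hgrp, neg_add_cancel, hid]
  have hinv2 : ∀ y ∈ bl.exit \ {x ∈ bl.exit | ∀ t : ℝ, t ≤ 0 → φ t x ∈ bl.B},
      φ (exitTime φ bl.B
          ((fun t x => φ (-t) x) (exitTime (fun t x => φ (-t) x) bl.B y) y))
        ((fun t x => φ (-t) x) (exitTime (fun t x => φ (-t) x) bl.B y) y) = y := by
    intro y hy
    rw [hXset] at hy
    have htmp := exitTime_rev hcont' hid' hgrp' bl' hy.1 hy.2
    simp only [neg_neg] at htmp
    have htmp2 : exitTime φ bl.B
        (φ (-(exitTime (fun t x => φ (-t) x) bl.B y)) y)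
        = exitTime (fun t x => φ (-t) x) bl.B y := htmp
    show φ (exitTime φ bl.B (φ (-(exitTime (fun t x => φ (-t) x) bl.B y)) y))
      (φ (-(exitTime (fun t x => φ (-t) x) bl.B y)) y) = y
    rw [htmp2, ← hgrp, add_neg_cancel, hid]
  -- continuity of the two maps
  have hFcont : ContinuousOn (fun x => φ (exitTime φ bl.B x) x)
      (bl.entrance \ {x ∈ bl.entrance | ∀ t : ℝ, 0 ≤ t → φ t x ∈ bl.B}) :=
    hcont.comp_continuousOn (hτcont.prodMk continuousOn_id)
  have hσcont : ContinuousOn (exitTime (fun t x => φ (-t) x) bl.B)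
      (bl.exit \ {x ∈ bl.exit | ∀ t : ℝ, t ≤ 0 → φ t x ∈ bl.B}) := by
    rw [hXset]; exact exitTime_continuousOn hcont' hid' hgrp' bl'
  have hGcont : ContinuousOn
      (fun y => (fun t x => φ (-t) x) (exitTime (fun t x => φ (-t) x) bl.B y) y)
      (bl.exit \ {x ∈ bl.exit | ∀ t : ℝ, t ≤ 0 → φ t x ∈ bl.B}) :=
    hcont'.comp_continuousOn (hσcont.prodMk continuousOn_id)
  refine ⟨⟨⟨fun p => ⟨φ (exitTime φ bl.B p) p, hmaps p p.2⟩,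
      fun q => ⟨(fun t x => φ (-t) x) (exitTime (fun t x => φ (-t) x) bl.B q) q,
        hmaps' q q.2⟩, ?_, ?_⟩, ?_, ?_⟩, fun p => rfl⟩
  · intro p
    exact Subtype.ext (hinv1 p p.2)
  · intro q
    exact Subtype.ext (hinv2 q q.2)
  · exact (hFcont.restrict).subtype_mk _
  · exact (hGcont.restrict).subtype_mk _
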